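/- Jacobi triple product (first form): ∏_{n=1}^∞ (1 + z q^n)(1 + z^{-1} q^{n-1}) = (∏_{n=1}^∞ (1-q^n)^{-1}) · ∑_{j=-∞}^∞ z^j q^{j(j+1)/2}, as formal Laurent series in z over ℚ[[q]]. -/

import Mathlib

open PowerSeries

noncomputable section JTP

def Tn (j : ℤ) : ℕ := (j * (j + 1) / 2).toNat

lemma T_nonneg (j : ℤ) : 0 ≤ j * (j + 1) / 2 := by
  apply Int.ediv_nonneg _ (by norm_num)
  nlinarith [sq_nonneg (2*j+1)]

lemma Tcast (j : ℤ) : (Tn j : ℤ) = j * (j + 1) / 2 := Int.toNat_of_nonneg (T_nonneg j)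

lemma Tstep (j : ℤ) : j * (j + 1) / 2 = (j - 1) * j / 2 + j := by
  obtain ⟨k, hk⟩ := Int.even_mul_succ_self j
  have h2 : (j - 1) * j = k + k - 2 * j := by rw [← hk]; ring
  rw [hk, h2]
  omega

lemma Tsub (j : ℤ) : (Tn (j-1) : ℤ) = Tn j - j := by
  have h := Tstep j
  have h1 := Tcast (j-1)
  have h2 := Tcast j
  rw [show j - 1 + 1 = j by ring] at h1
  omega

def phi (n : ℕ) : PowerSeries ℚ := ∏ m ∈ Finset.Ioc 0 n, (1 - PowerSeries.X ^ m)

lemma phi_constantCoeff (n : ℕ) : PowerSeries.constantCoeff (R := ℚ) (phi n) = 1 := by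
  unfold phi
  rw [map_prod]
  apply Finset.prod_eq_one
  intro m hm
  simp only [Finset.mem_Ioc] at hm
  rw [map_sub, map_one, map_pow, PowerSeries.constantCoeff_X, zero_pow (by omega), sub_zero]

lemma phi_ne (n : ℕ) : PowerSeries.constantCoeff (R := ℚ) (phi n) ≠ 0 := by
  rw [phi_constantCoeff]; norm_num

lemma phi_mul_inv (n : ℕ) : phi n * (phi n)⁻¹ = 1 := PowerSeries.mul_inv_cancel _ (phi_ne n)

lemma u_ne (m : ℕ) (hm : 0 < m) :
    PowerSeries.constantCoeff (R := ℚ) (1 - PowerSeries.X ^ m) ≠ 0 := by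
  rw [map_sub, map_one, map_pow, PowerSeries.constantCoeff_X, zero_pow (by omega), sub_zero]
  norm_num

lemma u_inv_mul (m : ℕ) (hm : 0 < m) :
    (1 - PowerSeries.X ^ m : PowerSeries ℚ)⁻¹ * (1 - PowerSeries.X ^ m) = 1 :=
  PowerSeries.inv_mul_cancel _ (u_ne m hm)

lemma phi_succ (n : ℕ) : phi (n + 1) = phi n * (1 - PowerSeries.X ^ (n + 1)) :=
  Finset.prod_Ioc_succ_top (Nat.zero_le _) _

lemma phi_inv_succ (n : ℕ) :
    (phi n)⁻¹ = (phi (n + 1))⁻¹ * (1 - PowerSeries.X ^ (n + 1)) := by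
  rw [phi_succ, PowerSeries.mul_inv_rev, mul_assoc, mul_comm ((phi n)⁻¹), ← mul_assoc,
    u_inv_mul _ (Nat.succ_pos n), one_mul]

def Hs (B : ℕ) (j : ℤ) : PowerSeries ℚ :=
  if j.natAbs ≤ B then
    PowerSeries.X ^ (Tn j) * phi (2 * B) * (phi ((B : ℤ) + j).toNat)⁻¹ *
      (phi ((B : ℤ) - j).toNat)⁻¹
  else 0

lemma phi_zero : phi 0 = 1 := by simp [phi]

lemma phi_inv_pred (a : ℕ) (h : 0 < a) :
    (phi (a-1))⁻¹ = (phi (a+1))⁻¹ * ((1 - PowerSeries.X^(a+1)) * (1 - PowerSeries.X^a)) := by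
  obtain ⟨a', rfl⟩ : ∃ a', a = a' + 1 := ⟨a - 1, by omega⟩
  rw [Nat.add_sub_cancel, phi_inv_succ a', phi_inv_succ (a'+1)]
  ring

lemma Hrec (B : ℕ) (j : ℤ) :
    Hs (B+1) j = Hs B j * (1 + PowerSeries.X ^ (2*B+1)) + Hs B (j-1) * PowerSeries.X ^ (B+1)
      + Hs B (j+1) * PowerSeries.X ^ B := by
  by_cases h1 : (B + 1 : ℕ) < j.natAbs
  · rw [Hs, if_neg (by omega), Hs, if_neg (by omega), Hs, if_neg (by omega),
      Hs, if_neg (by omega)]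
    simp
  by_cases h2 : j = (B + 1 : ℤ)
  · subst h2
    have hmain : Hs (B+1) ((B:ℤ)+1) = PowerSeries.X ^ Tn ((B:ℤ)+1) := by
      have e1 : ((B+1 : ℕ) : ℤ) + ((B:ℤ)+1) = ((2*(B+1) : ℕ) : ℤ) := by push_cast; ring
      have e2 : ((B+1 : ℕ) : ℤ) - ((B:ℤ)+1) = ((0 : ℕ) : ℤ) := by push_cast; ring
      rw [Hs, if_pos (by omega), e1, e2, Int.toNat_natCast, Int.toNat_natCast, phi_zero,
        inv_one, mul_one, mul_assoc, phi_mul_inv, mul_one]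
    have t0 : Hs B ((B:ℤ)+1) = 0 := by rw [Hs, if_neg (by omega)]
    have t1 : Hs B (((B:ℤ)+1) - 1) = PowerSeries.X ^ Tn (((B:ℤ)+1) - 1) := by
      have e3 : ((B : ℕ) : ℤ) + (((B:ℤ)+1) - 1) = ((2*B : ℕ) : ℤ) := by push_cast; ring
      have e4 : ((B : ℕ) : ℤ) - (((B:ℤ)+1) - 1) = ((0 : ℕ) : ℤ) := by push_cast; ring
      rw [Hs, if_pos (by omega), e3, e4, Int.toNat_natCast, Int.toNat_natCast, phi_zero,
        inv_one, mul_one, mul_assoc, phi_mul_inv, mul_one]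
    have t2 : Hs B (((B:ℤ)+1) + 1) = 0 := by rw [Hs, if_neg (by omega)]
    rw [hmain, t0, t1, t2, zero_mul, zero_mul, zero_add, add_zero, ← pow_add]
    congr 1
    have := Tsub ((B:ℤ)+1)
    omega
  by_cases h3 : j = -(B + 1 : ℤ)
  · subst h3
    have hmain : Hs (B+1) (-((B:ℤ)+1)) = PowerSeries.X ^ Tn (-((B:ℤ)+1)) := by
      have e1 : ((B+1 : ℕ) : ℤ) + (-((B:ℤ)+1)) = ((0 : ℕ) : ℤ) := by push_cast; ring
      have e2 : ((B+1 : ℕ) : ℤ) - (-((B:ℤ)+1)) = ((2*(B+1) : ℕ) : ℤ) := by push_cast; ring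
      rw [Hs, if_pos (by omega), e1, e2, Int.toNat_natCast, Int.toNat_natCast, phi_zero,
        inv_one, mul_one, mul_assoc, phi_mul_inv, mul_one]
    have t0 : Hs B (-((B:ℤ)+1)) = 0 := by rw [Hs, if_neg (by omega)]
    have t1 : Hs B ((-((B:ℤ)+1)) - 1) = 0 := by rw [Hs, if_neg (by omega)]
    have t2 : Hs B ((-((B:ℤ)+1)) + 1) = PowerSeries.X ^ Tn ((-((B:ℤ)+1)) + 1) := by
      have e3 : ((B : ℕ) : ℤ) + ((-((B:ℤ)+1)) + 1) = ((0 : ℕ) : ℤ) := by push_cast; ring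
      have e4 : ((B : ℕ) : ℤ) - ((-((B:ℤ)+1)) + 1) = ((2*B : ℕ) : ℤ) := by push_cast; ring
      rw [Hs, if_pos (by omega), e3, e4, Int.toNat_natCast, Int.toNat_natCast, phi_zero,
        inv_one, mul_one, mul_assoc, phi_mul_inv, mul_one]
    rw [hmain, t0, t1, t2, zero_mul, zero_mul, zero_add, zero_add, ← pow_add]
    congr 1
    have h5 := Tsub (-((B:ℤ)+1) + 1)
    have h6 : -((B:ℤ)+1) + 1 - 1 = -((B:ℤ)+1) := by ring
    rw [h6] at h5
    omega
  -- main case: |j| ≤ B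
  · have hja : j.natAbs ≤ B := by omega
    set a : ℕ := ((B : ℤ) + j).toNat with ha
    set b : ℕ := ((B : ℤ) - j).toNat with hb
    have haz : ((B : ℤ)) + j = (a : ℤ) := by omega
    have hbz : ((B : ℤ)) - j = (b : ℤ) := by omega
    have hab : a + b = 2 * B := by omega
    have haz1 : ((B + 1 : ℕ) : ℤ) + j = ((a + 1 : ℕ) : ℤ) := by push_cast; omega
    have hbz1 : ((B + 1 : ℕ) : ℤ) - j = ((b + 1 : ℕ) : ℤ) := by push_cast; omega
    set C : PowerSeries ℚ :=
      PowerSeries.X ^ (Tn j) * phi (2*B) * (phi (a+1))⁻¹ * (phi (b+1))⁻¹ with hC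
    have hLHS : Hs (B+1) j = C * ((1 - PowerSeries.X^(2*B+1)) * (1 - PowerSeries.X^(2*B+2))) := by
      rw [Hs, if_pos (by omega), haz1, hbz1, Int.toNat_natCast, Int.toNat_natCast,
        show 2*(B+1) = (2*B+1)+1 by ring, phi_succ, phi_succ, hC,
        show (2*B+1)+1 = 2*B+2 by ring]
      ring
    have hB1 : Hs B j * (1 + PowerSeries.X ^ (2*B+1)) =
        C * ((1 - PowerSeries.X^(a+1)) * (1 - PowerSeries.X^(b+1)) * (1 + PowerSeries.X^(2*B+1))) := by
      rw [Hs, if_pos hja, haz, hbz, Int.toNat_natCast, Int.toNat_natCast,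
        phi_inv_succ a, phi_inv_succ b, hC]
      ring
    have hB2 : Hs B (j-1) * PowerSeries.X ^ (B+1) =
        C * (PowerSeries.X^(b+1) * ((1 - PowerSeries.X^a) * (1 - PowerSeries.X^(a+1)))) := by
      rcases Nat.eq_zero_or_pos a with hA0 | hA0
      · rw [Hs, if_neg (by omega), hC, hA0]
        simp
      · have e3 : ((B : ℕ) : ℤ) + (j - 1) = ((a - 1 : ℕ) : ℤ) := by
          have : ((a - 1 : ℕ) : ℤ) = (a : ℤ) - 1 := by omega
          omega
        have e4 : ((B : ℕ) : ℤ) - (j - 1) = ((b + 1 : ℕ) : ℤ) := by push_cast; omega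
        have hT : Tn (j-1) + (B+1) = Tn j + (b+1) := by
          have h5 := Tsub j
          omega
        have hX : (PowerSeries.X : PowerSeries ℚ) ^ Tn (j-1) * PowerSeries.X^(B+1)
            = PowerSeries.X ^ Tn j * PowerSeries.X^(b+1) := by
          rw [← pow_add, ← pow_add, hT]
        rw [Hs, if_pos (by omega), e3, e4, Int.toNat_natCast, Int.toNat_natCast,
          phi_inv_pred a hA0, hC]
        linear_combination (phi (2*B) * ((phi (a+1))⁻¹ * ((1 - PowerSeries.X^(a+1)) * (1 - PowerSeries.X^a))) * (phi (b+1))⁻¹) * hX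
    have hB3 : Hs B (j+1) * PowerSeries.X ^ B =
        C * (PowerSeries.X^(a+1) * ((1 - PowerSeries.X^b) * (1 - PowerSeries.X^(b+1)))) := by
      rcases Nat.eq_zero_or_pos b with hB0 | hB0
      · rw [Hs, if_neg (by omega), hC, hB0]
        simp
      · have e3 : ((B : ℕ) : ℤ) + (j + 1) = ((a + 1 : ℕ) : ℤ) := by push_cast; omega
        have e4 : ((B : ℕ) : ℤ) - (j + 1) = ((b - 1 : ℕ) : ℤ) := by
          have : ((b - 1 : ℕ) : ℤ) = (b : ℤ) - 1 := by omega
          omega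
        have hT : Tn (j+1) + B = Tn j + (a+1) := by
          have h5 := Tsub (j+1)
          have h6 : j + 1 - 1 = j := by ring
          rw [h6] at h5
          omega
        have hX : (PowerSeries.X : PowerSeries ℚ) ^ Tn (j+1) * PowerSeries.X^B
            = PowerSeries.X ^ Tn j * PowerSeries.X^(a+1) := by
          rw [← pow_add, ← pow_add, hT]
        rw [Hs, if_pos (by omega), e3, e4, Int.toNat_natCast, Int.toNat_natCast,
          phi_inv_pred b hB0, hC]
        linear_combination (phi (2*B) * (phi (a+1))⁻¹ * ((phi (b+1))⁻¹ * ((1 - PowerSeries.X^(b+1)) * (1 - PowerSeries.X^b)))) * hX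
    rw [hLHS, hB1, hB2, hB3, ← mul_add, ← mul_add]
    congr 1
    have k1 : (PowerSeries.X : PowerSeries ℚ)^(2*B+1) = PowerSeries.X^a * PowerSeries.X^b * PowerSeries.X := by
      rw [← pow_add, ← pow_succ]
      congr 1
      omega
    have k2 : (PowerSeries.X : PowerSeries ℚ)^(2*B+2) = PowerSeries.X^a * PowerSeries.X^b * PowerSeries.X^2 := by
      rw [← pow_add, ← pow_add]
      congr 1
      omega
    have k3 : (PowerSeries.X : PowerSeries ℚ)^(a+1) = PowerSeries.X^a * PowerSeries.X := pow_succ _ _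
    have k4 : (PowerSeries.X : PowerSeries ℚ)^(b+1) = PowerSeries.X^b * PowerSeries.X := pow_succ _ _
    rw [k1, k2, k3, k4]
    ring

lemma coeffF (B : ℕ) (j : ℤ) :
    (∏ m ∈ Finset.Icc 1 B,
        ((1 + HahnSeries.single (1 : ℤ) ((PowerSeries.X : PowerSeries ℚ) ^ m)) *
         (1 + HahnSeries.single (-1 : ℤ) ((PowerSeries.X : PowerSeries ℚ) ^ (m - 1))))).coeff j
      = Hs B j := by
  induction B generalizing j with
  | zero =>
    rw [show Finset.Icc 1 0 = (∅ : Finset ℕ) from rfl, Finset.prod_empty, HahnSeries.coeff_one, Hs]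
    by_cases hj : j = 0
    · subst hj
      rw [if_pos rfl, if_pos (by omega)]
      simp [Tn, phi_zero]
    · rw [if_neg hj, if_neg (by omega)]
  | succ B ih =>
    rw [Finset.prod_Icc_succ_top (by omega), Nat.add_sub_cancel]
    set P := ∏ m ∈ Finset.Icc 1 B,
        ((1 + HahnSeries.single (1 : ℤ) ((PowerSeries.X : PowerSeries ℚ) ^ m)) *
         (1 + HahnSeries.single (-1 : ℤ) ((PowerSeries.X : PowerSeries ℚ) ^ (m - 1)))) with hP
    have hsm : HahnSeries.single (0:ℤ) ((PowerSeries.X : PowerSeries ℚ)^(B+1) * PowerSeries.X^B)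
        = HahnSeries.single (1:ℤ) ((PowerSeries.X : PowerSeries ℚ)^(B+1)) *
          HahnSeries.single (-1:ℤ) ((PowerSeries.X : PowerSeries ℚ)^B) := by
      rw [HahnSeries.single_mul_single]
      norm_num
    have hexp : (1 + HahnSeries.single (1:ℤ) ((PowerSeries.X : PowerSeries ℚ)^(B+1))) *
        (1 + HahnSeries.single (-1:ℤ) ((PowerSeries.X : PowerSeries ℚ)^B))
        = 1 + HahnSeries.single (1:ℤ) ((PowerSeries.X : PowerSeries ℚ)^(B+1))
          + HahnSeries.single (-1:ℤ) ((PowerSeries.X : PowerSeries ℚ)^B)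
          + HahnSeries.single (0:ℤ) ((PowerSeries.X : PowerSeries ℚ)^(B+1) * PowerSeries.X^B) := by
      rw [hsm]
      ring
    rw [hexp, mul_add, mul_add, mul_add, mul_one, HahnSeries.coeff_add, HahnSeries.coeff_add,
      HahnSeries.coeff_add]
    have c1 : (P * HahnSeries.single (1:ℤ) ((PowerSeries.X : PowerSeries ℚ)^(B+1))).coeff j
        = Hs B (j-1) * PowerSeries.X^(B+1) := by
      have h := HahnSeries.coeff_mul_single_add (x := P)
        (r := (PowerSeries.X : PowerSeries ℚ)^(B+1)) (a := j-1) (b := 1)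
      rw [sub_add_cancel] at h
      rw [h, ih]
    have c2 : (P * HahnSeries.single (-1:ℤ) ((PowerSeries.X : PowerSeries ℚ)^B)).coeff j
        = Hs B (j+1) * PowerSeries.X^B := by
      have h := HahnSeries.coeff_mul_single_add (x := P)
        (r := (PowerSeries.X : PowerSeries ℚ)^B) (a := j+1) (b := -1)
      rw [show j + 1 + (-1 : ℤ) = j by ring] at h
      rw [h, ih]
    have c0 : (P * HahnSeries.single (0:ℤ)
        ((PowerSeries.X : PowerSeries ℚ)^(B+1) * PowerSeries.X^B)).coeff j
        = Hs B j * (PowerSeries.X^(B+1) * PowerSeries.X^B) := by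
      rw [HahnSeries.coeff_mul_single_zero, ih]
    rw [c1, c2, c0, ih, Hrec B j, ← pow_add, show B + 1 + B = 2*B+1 by ring]
    ring

lemma prod_const_one (s : Finset ℕ) (h : ∀ m ∈ s, 0 < m) :
    PowerSeries.constantCoeff (R := ℚ) (∏ m ∈ s, (1 - PowerSeries.X ^ m)) = 1 := by
  rw [map_prod]
  apply Finset.prod_eq_one
  intro m hm
  rw [map_sub, map_one, map_pow, PowerSeries.constantCoeff_X, zero_pow (by have := h m hm; omega),
    sub_zero]

lemma modOne (D : ℕ) (s : Finset ℕ) (h : ∀ m ∈ s, D + 1 ≤ m) :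
    ∃ W : PowerSeries ℚ, ∏ m ∈ s, (1 - PowerSeries.X ^ m) = 1 + PowerSeries.X^(D+1) * W := by
  induction s using Finset.induction_on with
  | empty => exact ⟨0, by simp⟩
  | @insert c s' ha ih =>
    obtain ⟨W, hW⟩ := ih (fun m hm => h m (Finset.mem_insert_of_mem hm))
    have hcD : D + 1 ≤ c := h c (Finset.mem_insert_self _ _)
    have hxc : (PowerSeries.X : PowerSeries ℚ)^c = PowerSeries.X^(D+1) * PowerSeries.X^(c-(D+1)) := by
      rw [← pow_add]
      congr 1
      omega
    refine ⟨W - PowerSeries.X^(c-(D+1)) - PowerSeries.X^(c-(D+1)) * PowerSeries.X^(D+1) * W, ?_⟩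
    rw [Finset.prod_insert ha, hW, hxc]
    ring

lemma coeff_mul_one_add (Y W : PowerSeries ℚ) (D : ℕ) :
    PowerSeries.coeff (R := ℚ) D (Y * (1 + PowerSeries.X^(D+1) * W)) = PowerSeries.coeff (R := ℚ) D Y := by
  have : Y * (1 + PowerSeries.X^(D+1) * W) = Y + (Y * W) * PowerSeries.X^(D+1) := by ring
  rw [this, map_add, PowerSeries.coeff_mul_X_pow', if_neg (by omega), add_zero]

lemma phi_split (a n : ℕ) (h : a ≤ n) :
    phi n = phi a * ∏ m ∈ Finset.Ioc a n, (1 - PowerSeries.X ^ m) :=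
  (Finset.prod_Ioc_consecutive _ (Nat.zero_le a) h).symm

lemma inv_phi_split (a n : ℕ) (h : a ≤ n) :
    (phi a)⁻¹ = (phi n)⁻¹ * ∏ m ∈ Finset.Ioc a n, (1 - PowerSeries.X ^ m) := by
  have hE : PowerSeries.constantCoeff (R := ℚ) (∏ m ∈ Finset.Ioc a n, (1 - PowerSeries.X ^ m)) = 1 :=
    prod_const_one _ (fun m hm => by simp only [Finset.mem_Ioc] at hm; omega)
  rw [phi_split a n h, PowerSeries.mul_inv_rev, mul_comm
    ((∏ m ∈ Finset.Ioc a n, (1 - PowerSeries.X ^ m))⁻¹), mul_assoc,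
    PowerSeries.inv_mul_cancel _ (by rw [hE]; norm_num), mul_one]

lemma prod_inv_eq (B : ℕ) :
    ∏ m ∈ Finset.Ioc 0 B, (1 - (PowerSeries.X : PowerSeries ℚ) ^ m)⁻¹ = (phi B)⁻¹ := by
  induction B with
  | zero => simp [phi_zero]
  | succ B ih =>
    rw [Finset.prod_Ioc_succ_top (Nat.zero_le B), ih, phi_succ, PowerSeries.mul_inv_rev, mul_comm]

lemma one_add_inv (W : PowerSeries ℚ) (D : ℕ) :
    ∃ W' : PowerSeries ℚ,
      (1 + PowerSeries.X^(D+1) * W)⁻¹ = 1 + PowerSeries.X^(D+1) * W' := by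
  have hc : PowerSeries.constantCoeff (R := ℚ) (1 + PowerSeries.X^(D+1) * W) = 1 := by
    rw [map_add, map_one, map_mul, map_pow, PowerSeries.constantCoeff_X,
      zero_pow (by omega), zero_mul, add_zero]
  refine ⟨-(W * (1 + PowerSeries.X^(D+1) * W)⁻¹), ?_⟩
  have h1 := PowerSeries.inv_mul_cancel (1 + PowerSeries.X^(D+1) * W) (by rw [hc]; norm_num)
  linear_combination h1

end JTP

theorem jacobi_triple_product_first_form (j : ℤ) (D : ℕ) :
    ∃ B0 : ℕ, ∀ B ≥ B0,
      PowerSeries.coeff (R := ℚ) D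
        ((∏ m ∈ Finset.Icc 1 B,
            ((1 + HahnSeries.single (1 : ℤ) ((PowerSeries.X : PowerSeries ℚ) ^ m)) *
             (1 + HahnSeries.single (-1 : ℤ) ((PowerSeries.X : PowerSeries ℚ) ^ (m - 1))))).coeff j)
      = PowerSeries.coeff (R := ℚ) D
          ((∏ m ∈ Finset.Icc 1 B, (1 - (PowerSeries.X : PowerSeries ℚ) ^ m)⁻¹) *
            (PowerSeries.X : PowerSeries ℚ) ^ (j * (j + 1) / 2).toNat) := by
  refine ⟨D + j.natAbs, fun B hB => ?_⟩
  rw [coeffF B j]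
  have hja : j.natAbs ≤ B := by omega
  set a := ((B:ℤ)+j).toNat with ha
  set b := ((B:ℤ)-j).toNat with hb
  have hD_a : D ≤ a := by omega
  have hD_b : D ≤ b := by omega
  have h_a2B : a ≤ 2*B := by omega
  have h_b2B : b ≤ 2*B := by omega
  obtain ⟨W1, hW1⟩ := modOne D (Finset.Ioc a (2*B))
    (fun m hm => by simp only [Finset.mem_Ioc] at hm; omega)
  obtain ⟨W2, hW2⟩ := modOne D (Finset.Ioc b (2*B))
    (fun m hm => by simp only [Finset.mem_Ioc] at hm; omega)
  obtain ⟨W3, hW3⟩ := modOne D (Finset.Ioc B (2*B))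
    (fun m hm => by simp only [Finset.mem_Ioc] at hm; omega)
  obtain ⟨W4, hW4⟩ := one_add_inv W3 D
  have hs2 : (phi (2*B))⁻¹ = (1 + PowerSeries.X^(D+1)*W4) * (phi B)⁻¹ := by
    rw [phi_split B (2*B) (by omega), PowerSeries.mul_inv_rev, hW3, hW4]
  have key : Hs B j
      = (((PowerSeries.X^(Tn j) * (phi B)⁻¹) * (1 + PowerSeries.X^(D+1)*W1))
        * (1 + PowerSeries.X^(D+1)*W2)) * (1 + PowerSeries.X^(D+1)*W4) := by
    rw [Hs, if_pos hja, ← ha, ← hb, inv_phi_split a (2*B) h_a2B,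
      inv_phi_split b (2*B) h_b2B, hW1, hW2]
    linear_combination (PowerSeries.X^(Tn j) * (phi (2*B))⁻¹ * (1 + PowerSeries.X^(D+1)*W1)
        * (1 + PowerSeries.X^(D+1)*W2)) * phi_mul_inv (2*B)
      + (PowerSeries.X^(Tn j) * (1 + PowerSeries.X^(D+1)*W1)
        * (1 + PowerSeries.X^(D+1)*W2)) * hs2
  rw [key, coeff_mul_one_add, coeff_mul_one_add, coeff_mul_one_add,
    show Finset.Icc 1 B = Finset.Ioc 0 B from Finset.Icc_add_one_left_eq_Ioc 0 B, prod_inv_eq,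
    show (j * (j + 1) / 2).toNat = Tn j from rfl, mul_comm]
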